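/- Let τ be an M-topology on M : X → ℕ and let A : X → ℕ be a sub-M-set of M. Then the exterior of A equals the M-complement of the closure of A: ext(A) = (cl(A))ᶜ, i.e., for every x ∈ X, ext(A)(x) = M(x) − cl(A)(x); equivalently, cl(Aᶜ) = (int(A))ᶜ, i.e., cl(Aᶜ)(x) = M(x) − int(A)(x) for every x ∈ X. -/
import Mathlib


/-- M-complement of a sub-M-set: `Aᶜ = M ⊖ A` (pointwise truncated subtraction). -/
def mcompl {X : Type*} (M A : X → ℕ) : X → ℕ := fun x => M x - A x

/-- `τ` is an M-topology on the multiset `M : X → ℕ`. -/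
structure IsMTopology {X : Type*} (M : X → ℕ) (τ : Set (X → ℕ)) : Prop where
  le_of_mem : ∀ N ∈ τ, N ≤ M
  top_mem : M ∈ τ
  zero_mem : (0 : X → ℕ) ∈ τ
  sSup_mem : ∀ S ⊆ τ, (fun x => sSup {n | ∃ N ∈ S, N x = n}) ∈ τ
  min_mem : ∀ U ∈ τ, ∀ V ∈ τ, (fun x => min (U x) (V x)) ∈ τ

/-- Interior: pointwise supremum of all open `G ∈ τ` with `G ≤ A`. -/
noncomputable def mint {X : Type*} (τ : Set (X → ℕ)) (A : X → ℕ) : X → ℕ :=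
  fun x => sSup {n | ∃ G ∈ τ, G ≤ A ∧ G x = n}

/-- Closure: pointwise infimum of all closed `K` with `A ≤ K ≤ M`. -/
noncomputable def mcl {X : Type*} (M : X → ℕ) (τ : Set (X → ℕ)) (A : X → ℕ) : X → ℕ :=
  fun x => sInf {n | ∃ K, mcompl M K ∈ τ ∧ A ≤ K ∧ K ≤ M ∧ K x = n}

/-- Exterior: interior of the M-complement. -/
noncomputable def mext {X : Type*} (M : X → ℕ) (τ : Set (X → ℕ)) (A : X → ℕ) : X → ℕ :=
  mint τ (mcompl M A)

/-- Boundary: `bd(A) = cl(A) ∩ cl(Aᶜ)` (pointwise min). -/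
noncomputable def mbd {X : Type*} (M : X → ℕ) (τ : Set (X → ℕ)) (A : X → ℕ) : X → ℕ :=
  fun x => min (mcl M τ A x) (mcl M τ (mcompl M A) x)

lemma mint_mem {X : Type*} {M : X → ℕ} {τ : Set (X → ℕ)} (hτ : IsMTopology M τ)
    (A : X → ℕ) : mint τ A ∈ τ := by
  have h := hτ.sSup_mem {G | G ∈ τ ∧ G ≤ A} (fun G hG => hG.1)
  have heq : mint τ A =
      (fun x => sSup {n | ∃ N ∈ {G | G ∈ τ ∧ G ≤ A}, N x = n}) := by
    funext x
    show sSup _ = sSup _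
    apply congrArg
    ext n
    constructor
    · rintro ⟨G, hG, hGA, rfl⟩; exact ⟨G, ⟨hG, hGA⟩, rfl⟩
    · rintro ⟨G, ⟨hG, hGA⟩, rfl⟩; exact ⟨G, hG, hGA, rfl⟩
  rw [heq]; exact h

lemma le_mint {X : Type*} {τ : Set (X → ℕ)} {G A : X → ℕ}
    (hG : G ∈ τ) (hGA : G ≤ A) : G ≤ mint τ A := by
  intro x
  apply le_csSup ⟨A x, by rintro n ⟨G', _, hG', rfl⟩; exact hG' x⟩
  exact ⟨G, hG, hGA, rfl⟩

lemma mint_le {X : Type*} {M : X → ℕ} {τ : Set (X → ℕ)} (hτ : IsMTopology M τ)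
    (A : X → ℕ) : mint τ A ≤ A := by
  intro x
  have hne : (0 : ℕ) ∈ {n | ∃ G ∈ τ, G ≤ A ∧ G x = n} :=
    ⟨0, hτ.zero_mem, fun y => Nat.zero_le _, rfl⟩
  apply csSup_le ⟨0, hne⟩
  rintro n ⟨G, _, hGA, rfl⟩; exact hGA x

theorem ext_eq_compl_cl {X : Type*} (M : X → ℕ) (τ : Set (X → ℕ))
    (hτ : IsMTopology M τ) (A : X → ℕ) (hA : A ≤ M) :
    (∀ x, mext M τ A x = M x - mcl M τ A x) ∧
      (∀ x, mcl M τ (mcompl M A) x = M x - mint τ A x) := by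
  constructor
  · intro x
    set E := mext M τ A with hEdef
    have hEmem : E ∈ τ := mint_mem hτ _
    have hEle : E ≤ mcompl M A := mint_le hτ _
    have hEM : ∀ y, E y ≤ M y := fun y => le_trans (hEle y) (Nat.sub_le _ _)
    have hK0 : mcl M τ A x ≤ M x - E x := by
      apply Nat.sInf_le
      refine ⟨mcompl M E, ?_, ?_, fun y => Nat.sub_le _ _, rfl⟩
      · have heq : mcompl M (mcompl M E) = E := by
          funext y
          have h1 := hEM y
          show M y - (M y - E y) = E y
          omega
        rw [heq]; exact hEmem
      · intro y
        have h1 : E y ≤ M y - A y := hEle y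
        have h2 : A y ≤ M y := hA y
        show A y ≤ M y - E y
        omega
    have hlb : M x - E x ≤ mcl M τ A x := by
      have hMmem : M x ∈ {n | ∃ K, mcompl M K ∈ τ ∧ A ≤ K ∧ K ≤ M ∧ K x = n} := by
        refine ⟨M, ?_, hA, le_refl M, rfl⟩
        have : mcompl M M = (0 : X → ℕ) := by funext y; show M y - M y = 0; omega
        rw [this]; exact hτ.zero_mem
      apply le_csInf ⟨M x, hMmem⟩
      rintro n ⟨K, hKo, hAK, hKM, rfl⟩
      have hGE : mcompl M K ≤ E := by
        apply le_mint hKo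
        intro y
        have h1 : A y ≤ K y := hAK y
        have h2 : K y ≤ M y := hKM y
        show M y - K y ≤ M y - A y
        omega
      have h3 : M x - K x ≤ E x := hGE x
      have h4 := hEM x
      omega
    have h1 := hEM x
    omega
  · intro x
    set I := mint τ A with hIdef
    have hImem : I ∈ τ := mint_mem hτ _
    have hIA : ∀ y, I y ≤ A y := mint_le hτ _
    have hIM : ∀ y, I y ≤ M y := fun y => le_trans (hIA y) (hA y)
    have hK0 : mcl M τ (mcompl M A) x ≤ M x - I x := by
      apply Nat.sInf_le
      refine ⟨mcompl M I, ?_, ?_, fun y => Nat.sub_le _ _, rfl⟩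
      · have heq : mcompl M (mcompl M I) = I := by
          funext y
          have h1 := hIM y
          show M y - (M y - I y) = I y
          omega
        rw [heq]; exact hImem
      · intro y
        have h1 := hIA y
        show M y - A y ≤ M y - I y
        omega
    have hlb : M x - I x ≤ mcl M τ (mcompl M A) x := by
      have hMmem : M x ∈ {n | ∃ K, mcompl M K ∈ τ ∧ mcompl M A ≤ K ∧ K ≤ M ∧ K x = n} := by
        refine ⟨M, ?_, fun y => Nat.sub_le _ _, le_refl M, rfl⟩
        have : mcompl M M = (0 : X → ℕ) := by funext y; show M y - M y = 0; omega
        rw [this]; exact hτ.zero_mem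
      apply le_csInf ⟨M x, hMmem⟩
      rintro n ⟨K, hKo, hAK, hKM, rfl⟩
      have hGI : mcompl M K ≤ I := by
        apply le_mint hKo
        intro y
        have h1 : M y - A y ≤ K y := hAK y
        have h2 : A y ≤ M y := hA y
        show M y - K y ≤ A y
        omega
      have h3 : M x - K x ≤ I x := hGI x
      have h4 : K x ≤ M x := hKM x
      omega
    omega
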